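/- For a thrice-differentiable trajectory x : [0,T] → ℝ³ with ‖x⃛(t)‖ ≤ J_max and thrust f(t) = m·‖ẍ(t) + g·e₃‖ ≥ f_min > 0 for all t, the body angular rate magnitude satisfies ‖ω(t)‖ ≤ m·J_max / f_min, where ω is determined from the flatness relation ω = (m/f)·P·R⁻¹·x⃛ with P the projection onto the first two coordinates and R a rotation matrix. -/

import Mathlib

open Matrix Set

lemma norm_mulVec_orth {A : Matrix (Fin 3) (Fin 3) ℝ}
    (hA : A ∈ Matrix.orthogonalGroup (Fin 3) ℝ) (v w : EuclideanSpace ℝ (Fin 3))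
    (hw : ∀ i, w i = A.mulVec v i) : ‖w‖ = ‖v‖ := by
  have h1 : star A * A = 1 := (Matrix.mem_orthogonalGroup_iff' (Fin 3) ℝ).mp hA
  have key : (A.mulVec v) ⬝ᵥ (A.mulVec v) = v ⬝ᵥ v := by
    rw [Matrix.dotProduct_mulVec, ← Matrix.vecMul_transpose, Matrix.vecMul_vecMul]
    have : Aᵀ * A = 1 := h1
    rw [this, Matrix.vecMul_one]
  rw [EuclideanSpace.norm_eq, EuclideanSpace.norm_eq]
  congr 1
  simp only [hw]
  simpa [dotProduct, Real.norm_eq_abs, sq_abs, pow_two] using key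

lemma norm_proj_le (v w : EuclideanSpace ℝ (Fin 3))
    (hw : ∀ i, w i = (Matrix.diagonal ![1, 1, 0]).mulVec v i) : ‖w‖ ≤ ‖v‖ := by
  rw [EuclideanSpace.norm_eq, EuclideanSpace.norm_eq]
  apply Real.sqrt_le_sqrt
  simp only [hw, Matrix.mulVec_diagonal]
  rw [Fin.sum_univ_three, Fin.sum_univ_three]
  simp [Real.norm_eq_abs, sq_abs]
  positivity

/-- Under the flatness relation `ω = (m/f)·P·R⁻¹·x⃛` with `P = diag(1,1,0)`,
bounded jerk `‖x⃛‖ ≤ J_max` and thrust `f ≥ f_min > 0`, the body angular rate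
satisfies `‖ω‖ ≤ m·J_max/f_min`. -/
theorem body_rate_bound
    (T m Jmax fmin : ℝ) (hm : 0 < m) (hfmin : 0 < fmin)
    (jerk ω : ℝ → EuclideanSpace ℝ (Fin 3))
    (f : ℝ → ℝ)
    (R : ℝ → Matrix (Fin 3) (Fin 3) ℝ)
    (hR : ∀ t ∈ Icc (0:ℝ) T, R t ∈ Matrix.orthogonalGroup (Fin 3) ℝ)
    (hjerk : ∀ t ∈ Icc (0:ℝ) T, ‖jerk t‖ ≤ Jmax)
    (hf : ∀ t ∈ Icc (0:ℝ) T, fmin ≤ f t)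
    (P : Matrix (Fin 3) (Fin 3) ℝ)
    (hP : P = Matrix.diagonal ![1, 1, 0])
    (hω : ∀ t ∈ Icc (0:ℝ) T,
      ω t = (m / f t) • (WithLp.toLp 2 (P.mulVec ((R t)⁻¹.mulVec (jerk t))) : EuclideanSpace ℝ (Fin 3))) :
    ∀ t ∈ Icc (0:ℝ) T, ‖ω t‖ ≤ m * Jmax / fmin := by
  intro t ht
  have hRinv : (R t)⁻¹ ∈ Matrix.orthogonalGroup (Fin 3) ℝ := by
    have h := hR t ht
    have h1 : star (R t) * R t = 1 := (Matrix.mem_orthogonalGroup_iff' (Fin 3) ℝ).mp h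
    have hinv : (R t)⁻¹ = star (R t) := Matrix.inv_eq_left_inv h1
    rw [hinv, Matrix.mem_orthogonalGroup_iff]
    simpa [Matrix.star_eq_conjTranspose, Matrix.conjTranspose_eq_transpose_of_trivial] using h1
  have hft : 0 < f t := lt_of_lt_of_le hfmin (hf t ht)
  have hJ : 0 ≤ Jmax := le_trans (norm_nonneg _) (hjerk t ht)
  have hmf : ‖m / f t‖ = m / f t := by
    rw [Real.norm_eq_abs, abs_of_pos (div_pos hm hft)]
  rw [hω t ht, norm_smul, hmf]
  set u : EuclideanSpace ℝ (Fin 3) := WithLp.toLp 2 ((R t)⁻¹.mulVec (jerk t)) with hu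
  set z : EuclideanSpace ℝ (Fin 3) := WithLp.toLp 2 (P.mulVec u) with hz
  have h1 : ‖u‖ = ‖jerk t‖ := norm_mulVec_orth hRinv (jerk t) u (fun _ => rfl)
  have h2 : ‖z‖ ≤ ‖u‖ := norm_proj_le u z (by intro i; rw [hz, hP])
  have h3 : ‖z‖ ≤ Jmax := le_trans h2 (h1 ▸ hjerk t ht)
  calc m / f t * ‖z‖ ≤ m / f t * Jmax :=
        mul_le_mul_of_nonneg_left h3 (le_of_lt (div_pos hm hft))
    _ = m * Jmax / f t := by ring
    _ ≤ m * Jmax / fmin := by gcongr; exact hf t ht
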